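/- Let T be a finite tree with vertex set S, W ⊆ S with |W| ≥ 2, and for each extreme point w ∈ Ex(W) let M_w be the vertex set of the unique component of T \ w containing W \ {w}, and V_w := S \ M_w. Then the sets {V_w : w ∈ Ex(W)} are pairwise disjoint. -/

import Mathlib

/-- The convex closure operator `τ(A) = ⋂ {K ∈ 𝒦 : A ⊆ K}`. -/
def convexClosure {α : Type*} (𝒦 : Set (Set α)) (A : Set α) : Set α :=
  ⋂₀ {K | K ∈ 𝒦 ∧ A ⊆ K}

/-- The vertex geometry of a graph. -/
def vertexGeometry {α : Type*} (G : SimpleGraph α) : Set (Set α) :=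
  {A | A = ∅ ∨ (G.induce A).Connected}

/-- The set of extreme points of `W` in the vertex geometry of `G`. -/
def treeExtremePoints {α : Type*} (G : SimpleGraph α) (W : Set α) : Set α :=
  {w | w ∈ W ∧ w ∉ convexClosure (vertexGeometry G) (W \ {w})}

/-- A walk in `G` whose support lies in `s` yields reachability in `G.induce s`. -/
lemma reachable_induce_of_walk {α : Type*} (G : SimpleGraph α) (s : Set α) :
    ∀ {x y : α} (p : G.Walk x y) (h : ∀ v ∈ p.support, v ∈ s),
      (G.induce s).Reachable ⟨x, h x p.start_mem_support⟩ ⟨y, h y p.end_mem_support⟩ := by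
  intro x y p
  induction p with
  | nil => intro h; exact SimpleGraph.Reachable.refl _
  | @cons a b c ha p ih =>
    intro h
    have hb : ∀ v ∈ p.support, v ∈ s := fun v hv => h v (by simp [hv])
    have hadj : (G.induce s).Adj ⟨a, h a (by simp)⟩ ⟨b, hb b p.start_mem_support⟩ := by
      simpa using ha
    exact hadj.reachable.trans (ih hb)

/-- If `y ∈ M`, `M` is the image of the support of a component of `G.induce {v | v ≠ w}`,
and `x` is connected to `y` by a walk avoiding `w`, then `x ∈ M`. -/
lemma mem_of_walk_avoiding {α : Type*} {G : SimpleGraph α} {w : α} {M : Set α}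
    {C : (G.induce {v : α | v ≠ w}).ConnectedComponent}
    (hMC : M = Subtype.val '' C.supp) {x y : α} (p : G.Walk x y)
    (hy : y ∈ M) (hw : ∀ v ∈ p.support, v ≠ w) : x ∈ M := by
  have hr := reachable_induce_of_walk G {v : α | v ≠ w} p hw
  obtain ⟨y', hy'C, hy'⟩ := hMC ▸ hy
  have hy'' : (⟨y, hw y p.end_mem_support⟩ : {v : α // v ≠ w}) = y' := Subtype.ext hy'.symm
  rw [hMC]
  refine ⟨⟨x, hw x p.start_mem_support⟩, ?_, rfl⟩
  have : (G.induce {v : α | v ≠ w}).connectedComponentMk ⟨x, _⟩ =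
      (G.induce {v : α | v ≠ w}).connectedComponentMk ⟨y, _⟩ :=
    SimpleGraph.ConnectedComponent.sound hr
  simp only [SimpleGraph.ConnectedComponent.mem_supp_iff] at hy'C ⊢
  rw [this, hy'']
  exact hy'C

/-- Let `T` be a finite tree with vertex set `S` and `W ⊆ S` with `|W| ≥ 2`. For each
extreme point `w` of `W`, let `M w` be the vertex set of the (unique) connected
component of `T \ w` containing `W \ {w}`, and `V w := S \ M w`. Then the sets
`V w`, for `w ∈ Ex(W)`, are pairwise disjoint. -/
theorem complements_pairwise_disjoint {α : Type*} [Fintype α]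
    (G : SimpleGraph α) (hconn : G.Connected) (hacyc : G.IsAcyclic)
    (W : Set α) (hW : 2 ≤ W.ncard)
    (M : α → Set α)
    (hM : ∀ w ∈ treeExtremePoints G W,
      (∃ C : (G.induce {x : α | x ≠ w}).ConnectedComponent,
        M w = Subtype.val '' C.supp) ∧ W \ {w} ⊆ M w) :
    (treeExtremePoints G W).Pairwise fun w₁ w₂ =>
      Disjoint (Set.univ \ M w₁) (Set.univ \ M w₂) := by
  classical
  intro w₁ hw₁ w₂ hw₂ hne
  obtain ⟨⟨C₁, hC₁⟩, hWM₁⟩ := hM w₁ hw₁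
  obtain ⟨⟨C₂, hC₂⟩, hWM₂⟩ := hM w₂ hw₂
  have hw₂M₁ : w₂ ∈ M w₁ := hWM₁ ⟨hw₂.1, hne.symm⟩
  have hw₁M₂ : w₁ ∈ M w₂ := hWM₂ ⟨hw₁.1, hne⟩
  rw [Set.disjoint_left]
  rintro x ⟨-, hx₁⟩ ⟨-, hx₂⟩
  -- x ≠ w₁ and x ≠ w₂
  have hxw₁ : x ≠ w₁ := fun h => hx₂ (h ▸ hw₁M₂)
  have hxw₂ : x ≠ w₂ := fun h => hx₁ (h ▸ hw₂M₁)
  -- take a path from x to w₁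
  obtain ⟨q⟩ := hconn.preconnected x w₁
  let p := q.toPath
  have hp : (p : G.Walk x w₁).IsPath := q.toPath.2
  -- w₂ must be in the support of p, else x ∈ M w₂
  have hmem : w₂ ∈ (p : G.Walk x w₁).support := by
    by_contra hno
    exact hx₂ (mem_of_walk_avoiding hC₂ (p : G.Walk x w₁) hw₁M₂
      (fun v hv hveq => hno (hveq ▸ hv)))
  -- the prefix of p up to w₂ avoids w₁
  set r := (p : G.Walk x w₁).takeUntil w₂ hmem with hr
  have hw₁r : ∀ v ∈ r.support, v ≠ w₁ := by
    intro v hv hveq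
    have hv' : w₁ ∈ r.support := hveq ▸ hv
    have hsplit := (p : G.Walk x w₁).take_spec hmem
    have hnodup := hp.support_nodup
    rw [← hsplit, SimpleGraph.Walk.support_append, List.nodup_append] at hnodup
    have hd := hnodup.2.2
    have hend : w₁ ∈ ((p : G.Walk x w₁).dropUntil w₂ hmem).support :=
      SimpleGraph.Walk.end_mem_support _
    have htail : w₁ ∈ ((p : G.Walk x w₁).dropUntil w₂ hmem).support.tail := by
      rw [SimpleGraph.Walk.support_eq_cons] at hend
      cases hend with
      | head => exact absurd rfl hne
      | tail _ h => exact h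
    exact hd _ hv' _ htail rfl
  exact hx₁ (mem_of_walk_avoiding hC₁ r hw₂M₁ hw₁r)
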